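/- (Non-crossing of NSS/PSS edges.) Let l₁ < r₁ and l₂ < r₂ be pairs of indices in [1,n] such that, for each t ∈ {1,2} and every k with l_t < k < r_t, the suffix x_k satisfies x_k ≻ x_{l_t} and x_k ≻ x_{r_t} (this holds whenever l_t and r_t are connected by a next-smaller-suffix or previous-smaller-suffix edge). Then it is impossible that l₁ < l₂ < r₁ < r₂. -/

import Mathlib

namespace LynArr

variable {α : Type*} [LinearOrder α]

/-- Strict lexicographic order on words:
`u ≺ v` iff `u` is a proper prefix of `v`, or at the first differing position `u` is smaller. -/
def Llt (u v : List α) : Prop := List.Lex (· < ·) u v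

/-- The suffix `x_i = x[i..n]` (1-based indexing). -/
def suff (x : List α) (i : ℕ) : List α := x.drop (i - 1)

/-- The subword `x[i..j]` (1-based, inclusive). -/
def sub (x : List α) (i j : ℕ) : List α := (x.drop (i - 1)).take (j - i + 1)

/-- `w` is a Lyndon word: nonempty and lexicographically smaller than
all of its nonempty proper suffixes. -/
def IsLyndon (w : List α) : Prop :=
  w ≠ [] ∧ ∀ k, 0 < k → k < w.length → Llt w (w.drop k)

/-- `w` is an inverse Lyndon word: nonempty and lexicographically greater than
all of its nonempty proper suffixes. -/
def IsInvLyndon (w : List α) : Prop :=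
  w ≠ [] ∧ ∀ k, 0 < k → k < w.length → Llt (w.drop k) w

/-- `lce x i j`: the length of the longest common prefix of the suffixes `x_i` and `x_j`. -/
def lce (x : List α) (i j : ℕ) : ℕ :=
  (((suff x i).zip (suff x j)).takeWhile fun p => p.1 == p.2).length

/-- Non-crossing of NSS/PSS edges: if for each pair `(lₜ, rₜ)` every suffix strictly
between the endpoints is lexicographically greater than both endpoint suffixes, then the
configuration `l₁ < l₂ < r₁ < r₂` is impossible. -/
theorem nss_pss_noncrossing {α : Type*} [LinearOrder α] (x : List α) (n l₁ r₁ l₂ r₂ : ℕ)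
    (hn : n = x.length)
    (hl₁ : 1 ≤ l₁) (hlr₁ : l₁ < r₁) (hr₁ : r₁ ≤ n)
    (hl₂ : 1 ≤ l₂) (hlr₂ : l₂ < r₂) (hr₂ : r₂ ≤ n)
    (he₁ : ∀ k, l₁ < k → k < r₁ → Llt (suff x l₁) (suff x k) ∧ Llt (suff x r₁) (suff x k))
    (he₂ : ∀ k, l₂ < k → k < r₂ → Llt (suff x l₂) (suff x k) ∧ Llt (suff x r₂) (suff x k)) :
    ¬ (l₁ < l₂ ∧ l₂ < r₁ ∧ r₁ < r₂) := by
  rintro ⟨h12, h21, hrr⟩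
  have h1 : Llt (suff x r₁) (suff x l₂) := (he₁ l₂ h12 h21).2
  have h2 : Llt (suff x l₂) (suff x r₁) := (he₂ r₁ h21 hrr).1
  exact (List.Lex.asymm (· < · : α → α → Prop)).asymm _ _ h1 h2

end LynArr
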